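/- The Toffoli (2-CN) gate decomposes as: Toffoli = (CV on qubits 2→3) · (CNOT on 1→2) · (CV† on 2→3) · (CNOT on 1→2) · (CV on 1→3), where CV is the controlled-V gate with V² = σ_x. That is, the product of these five two-qubit gates (extended to three qubits) equals the Toffoli gate |a,b,c⟩ ↦ |a, b, (a∧b)⊕c⟩. -/

import Mathlib

open Matrix Complex
open scoped Matrix Kronecker

noncomputable section

def σx : Matrix (Fin 2) (Fin 2) ℂ := !![0, 1; 1, 0]

/-- The V gate, a square root of NOT. -/
def Vgate : Matrix (Fin 2) (Fin 2) ℂ :=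
  (2 : ℂ)⁻¹ • !![1 + Complex.I, 1 - Complex.I; 1 - Complex.I, 1 + Complex.I]

/-- Controlled gate `C-W = |0⟩⟨0|⊗I + |1⟩⟨1|⊗W` on a pair of qubits. -/
def ctrl (W : Matrix (Fin 2) (Fin 2) ℂ) : Matrix (Fin 2 × Fin 2) (Fin 2 × Fin 2) ℂ :=
  Matrix.of fun p q =>
    if p.1 = q.1 then (if q.1 = 1 then W p.2 q.2 else if p.2 = q.2 then 1 else 0) else 0

/-- C-V on qubits 2 (control) and 3 (target), identity on qubit 1. -/
def CV23 : Matrix (Fin 2 × Fin 2 × Fin 2) (Fin 2 × Fin 2 × Fin 2) ℂ :=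
  (1 : Matrix (Fin 2) (Fin 2) ℂ) ⊗ₖ ctrl Vgate

/-- CNOT on qubits 1 (control) and 2 (target), identity on qubit 3. -/
def CNOT12 : Matrix (Fin 2 × Fin 2 × Fin 2) (Fin 2 × Fin 2 × Fin 2) ℂ :=
  Matrix.of fun p q => (ctrl σx) (p.1, p.2.1) (q.1, q.2.1) * (if p.2.2 = q.2.2 then 1 else 0)

/-- C-V on qubits 1 (control) and 3 (target), identity on qubit 2. -/
def CV13 : Matrix (Fin 2 × Fin 2 × Fin 2) (Fin 2 × Fin 2 × Fin 2) ℂ :=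
  Matrix.of fun p q => (ctrl Vgate) (p.1, p.2.2) (q.1, q.2.2) * (if p.2.1 = q.2.1 then 1 else 0)

/-- The Toffoli gate `|a,b,c⟩ ↦ |a,b,(a·b)⊕c⟩`. -/
def Toffoli : Matrix (Fin 2 × Fin 2 × Fin 2) (Fin 2 × Fin 2 × Fin 2) ℂ :=
  Matrix.of fun p q =>
    if p.1 = q.1 ∧ p.2.1 = q.2.1 ∧ p.2.2 = q.2.2 + q.1 * q.2.1 then 1 else 0

/-- Block-diagonal (in the first qubit) matrix built from two 4×4 blocks. -/
def blk (B : Fin 2 → Matrix (Fin 2 × Fin 2) (Fin 2 × Fin 2) ℂ) :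
    Matrix (Fin 2 × Fin 2 × Fin 2) (Fin 2 × Fin 2 × Fin 2) ℂ :=
  Matrix.of fun p q => if p.1 = q.1 then B p.1 p.2 q.2 else 0

lemma blk_mul (B C : Fin 2 → Matrix (Fin 2 × Fin 2) (Fin 2 × Fin 2) ℂ) :
    blk B * blk C = blk fun a => B a * C a := by
  ext ⟨a, p⟩ ⟨b, q⟩
  simp only [blk, Matrix.mul_apply, Matrix.of_apply, Fintype.sum_prod_type, Fin.sum_univ_two]
  fin_cases a <;> fin_cases b <;>
    simp [Matrix.mul_apply, Fintype.sum_prod_type]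

lemma blk_conjTranspose (B : Fin 2 → Matrix (Fin 2 × Fin 2) (Fin 2 × Fin 2) ℂ) :
    (blk B)ᴴ = blk fun a => (B a)ᴴ := by
  ext ⟨a, p⟩ ⟨b, q⟩
  simp only [blk, Matrix.conjTranspose_apply, Matrix.of_apply]
  fin_cases a <;> fin_cases b <;> simp

lemma CV23_eq : CV23 = blk fun _ => ctrl Vgate := by
  ext ⟨a, p⟩ ⟨b, q⟩
  simp [CV23, blk, Matrix.one_apply, ite_mul]

lemma CNOT12_eq :
    CNOT12 = blk fun a => if a = 1 then σx ⊗ₖ (1 : Matrix (Fin 2) (Fin 2) ℂ) else 1 := by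
  ext ⟨a, ⟨p1, p2⟩⟩ ⟨b, ⟨q1, q2⟩⟩
  simp only [CNOT12, blk, ctrl, Matrix.of_apply]
  fin_cases a <;> fin_cases b <;>
    simp [Matrix.one_apply, Prod.ext_iff, ite_and, mul_ite, mul_one, mul_zero]
  all_goals
    split_ifs <;> simp_all

lemma CV13_eq :
    CV13 = blk fun a => if a = 1 then (1 : Matrix (Fin 2) (Fin 2) ℂ) ⊗ₖ Vgate else 1 := by
  ext ⟨a, ⟨p1, p2⟩⟩ ⟨b, ⟨q1, q2⟩⟩
  simp only [CV13, blk, ctrl, Matrix.of_apply]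
  fin_cases a <;> fin_cases b <;>
    simp [Matrix.one_apply, Prod.ext_iff, ite_and, mul_ite, mul_one, mul_zero, mul_comm]
  all_goals
    split_ifs <;> simp_all

lemma Toffoli_eq : Toffoli = blk fun a => if a = 1 then ctrl σx else 1 := by
  ext ⟨a, ⟨p1, p2⟩⟩ ⟨b, ⟨q1, q2⟩⟩
  simp only [Toffoli, blk, ctrl, σx, Matrix.of_apply]
  fin_cases a <;> fin_cases b <;> fin_cases p1 <;> fin_cases p2 <;> fin_cases q1 <;> fin_cases q2 <;>
    norm_num [Matrix.one_apply, Prod.ext_iff, show ((0:Fin 2) = 2) ↔ True from by decide,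
      show ((1:Fin 2) = 2) ↔ False from by decide, show ((1:Fin 2) + 1 = 0) from by decide]

set_option maxHeartbeats 4000000 in
lemma blocks (a : Fin 2) :
    (if a = 1 then ctrl σx else 1) =
      ctrl Vgate * (if a = 1 then σx ⊗ₖ (1 : Matrix (Fin 2) (Fin 2) ℂ) else 1) *
        (ctrl Vgate)ᴴ * (if a = 1 then σx ⊗ₖ (1 : Matrix (Fin 2) (Fin 2) ℂ) else 1) *
        (if a = 1 then (1 : Matrix (Fin 2) (Fin 2) ℂ) ⊗ₖ Vgate else 1) := by
  fin_cases a <;>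
  · simp only [show ((0:Fin 2) = 1) = False from by simp, show ((1:Fin 2) = 1) = True from by simp,
      if_true, if_false, Matrix.mul_one, Matrix.one_mul]
    ext ⟨p1, p2⟩ ⟨q1, q2⟩
    fin_cases p1 <;> fin_cases p2 <;> fin_cases q1 <;> fin_cases q2 <;>
    · simp only [Matrix.mul_apply, Fintype.sum_prod_type, Fin.sum_univ_two,
        Matrix.conjTranspose_apply, Matrix.kroneckerMap_apply, ctrl, Vgate, σx,
        Matrix.smul_apply, smul_eq_mul, Matrix.one_apply, Matrix.of_apply]
      norm_num [Complex.ext_iff, Matrix.one_apply, Prod.ext_iff]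

set_option maxHeartbeats 1000000 in
/-- The Toffoli gate decomposes into five two-qubit gates using the square root of NOT:
`Toffoli = CV₂₃ · CNOT₁₂ · CV₂₃† · CNOT₁₂ · CV₁₃`. -/
theorem toffoli_decomposition :
    Toffoli = CV23 * CNOT12 * CV23ᴴ * CNOT12 * CV13 := by
  rw [Toffoli_eq, CV23_eq, CNOT12_eq, CV13_eq, blk_conjTranspose, blk_mul, blk_mul, blk_mul,
    blk_mul]
  exact congrArg blk (funext fun a => blocks a)

end
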